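/- Let A be an n×n real matrix and 0 ≤ k ≤ n. Then A is a semimonotone matrix of exact order k (an E0_k-matrix) if and only if its transpose Aᵀ is a semimonotone matrix of exact order k; likewise A is a strictly semimonotone matrix of exact order k (an E_k-matrix) if and only if Aᵀ is. -/

import Mathlib

open Matrix Finset

/-- A real square matrix `A` is semimonotone if for every nonzero entrywise-nonnegative
vector `x` there is an index `i` with `x i > 0` and `(A *ᵥ x) i ≥ 0`. -/
def SemiMonotone {ι : Type*} [Fintype ι] (A : Matrix ι ι ℝ) : Prop :=
  ∀ x : ι → ℝ, x ≠ 0 → 0 ≤ x → ∃ i, 0 < x i ∧ 0 ≤ A.mulVec x i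

/-- A real square matrix `A` is strictly semimonotone if for every nonzero
entrywise-nonnegative vector `x` there is an index `i` with `x i > 0` and `(A *ᵥ x) i > 0`. -/
def StrictlySemiMonotone {ι : Type*} [Fintype ι] (A : Matrix ι ι ℝ) : Prop :=
  ∀ x : ι → ℝ, x ≠ 0 → 0 ≤ x → ∃ i, 0 < x i ∧ 0 < A.mulVec x i

/-- The principal submatrix of `A` with rows and columns indexed by `s`. -/
def PrincipalSubmatrix {n : ℕ} (A : Matrix (Fin n) (Fin n) ℝ) (s : Finset (Fin n)) :
    Matrix s s ℝ := A.submatrix (fun i => (i : Fin n)) (fun j => (j : Fin n))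

/-- `A` is a semimonotone matrix of exact order `k` (an `E0_k`-matrix): every principal
submatrix of order `n - k` is semimonotone, but no principal submatrix of order
`r` with `n - k < r ≤ n` is semimonotone. -/
def SemimonotoneExactOrder {n : ℕ} (A : Matrix (Fin n) (Fin n) ℝ) (k : ℕ) : Prop :=
  (∀ s : Finset (Fin n), s.card = n - k → SemiMonotone (PrincipalSubmatrix A s)) ∧
  (∀ s : Finset (Fin n), n - k < s.card → ¬ SemiMonotone (PrincipalSubmatrix A s))

/-- `A` is a strictly semimonotone matrix of exact order `k` (an `E_k`-matrix). -/
def StrictlySemimonotoneExactOrder {n : ℕ} (A : Matrix (Fin n) (Fin n) ℝ) (k : ℕ) : Prop :=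
  (∀ s : Finset (Fin n), s.card = n - k → StrictlySemiMonotone (PrincipalSubmatrix A s)) ∧
  (∀ s : Finset (Fin n), n - k < s.card → ¬ StrictlySemiMonotone (PrincipalSubmatrix A s))

section Auxiliary

lemma sq_expand (p c t : ℝ) : ((1-t)*p + t*c)^2 = p^2 + t*(2*(p*c - p^2)) + t^2*((c-p)^2) := by ring

lemma gordan {ι κ : Type*} [Fintype ι] [Fintype κ] [Nonempty ι] (c : ι → κ → ℝ)
    (h : ∀ d : κ → ℝ, ∃ i, 0 ≤ ∑ j, c i j * d j) :
    ∃ z : ι → ℝ, (∀ i, 0 ≤ z i) ∧ (∑ i, z i = 1) ∧ ∀ j, ∑ i, z i * c i j = 0 := by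
  classical
  set g : (ι → ℝ) → ℝ := fun z => ∑ j, (∑ i, z i * c i j)^2 with hg_def
  have hg : Continuous g := by
    apply continuous_finset_sum
    intro j _
    exact (continuous_finset_sum _ (fun i _ => (continuous_apply i).mul continuous_const)).pow 2
  have hne : (stdSimplex ℝ ι).Nonempty := ⟨Pi.single (Classical.arbitrary ι) 1,
    single_mem_stdSimplex ℝ _⟩
  obtain ⟨z, hzmem, hzmin⟩ := (isCompact_stdSimplex ℝ ι).exists_isMinOn hne hg.continuousOn
  set p : κ → ℝ := fun j => ∑ i, z i * c i j with hp_def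
  by_cases hp : ∀ j, p j = 0
  · exact ⟨z, hzmem.1, hzmem.2, hp⟩
  -- m > 0
  push_neg at hp
  obtain ⟨j₀, hj₀⟩ := hp
  set m : ℝ := ∑ j, (p j)^2 with hm_def
  have hm_pos : 0 < m := by
    apply Finset.sum_pos' (fun j _ => sq_nonneg _) ⟨j₀, Finset.mem_univ _, by positivity⟩
  -- variational inequality: ∀ i, m ≤ ∑ j, c i j * p j
  have key : ∀ i, m ≤ ∑ j, p j * c i j := by
    intro i
    by_contra hlt
    push_neg at hlt
    set S : ℝ := ∑ j, p j * c i j with hS_def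
    set B : ℝ := ∑ j, (c i j - p j)^2 with hB_def
    have hB : 0 ≤ B := Finset.sum_nonneg (fun j _ => sq_nonneg _)
    have hφ : ∀ t : ℝ, 0 < t → t ≤ 1 → 0 ≤ 2*(S - m) + t*B := by
      intro t ht0 ht1
      have hzt : (1-t) • z + t • (Pi.single i 1 : ι → ℝ) ∈ stdSimplex ℝ ι :=
        (convex_stdSimplex ℝ ι) hzmem (single_mem_stdSimplex ℝ i) (by linarith) (le_of_lt ht0)
          (by ring_nf)
      have hge := hzmin hzt
      have hpt : ∀ j, (∑ i', ((1-t) • z + t • (Pi.single i 1 : ι → ℝ)) i' * c i' j)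
          = (1-t) * p j + t * c i j := by
        intro j
        have : ∀ i', ((1-t) • z + t • (Pi.single i 1 : ι → ℝ)) i' * c i' j
            = (1-t) * (z i' * c i' j) + t * ((Pi.single i 1 : ι → ℝ) i' * c i' j) := by
          intro i'; simp [Pi.smul_apply, smul_eq_mul]; ring
        rw [Finset.sum_congr rfl (fun i' _ => this i')]
        rw [Finset.sum_add_distrib, ← Finset.mul_sum, ← Finset.mul_sum]
        congr 2
        rw [Finset.sum_eq_single i]
        · simp
        · intro b _ hb; simp [Pi.single_apply, hb]
        · intro hb; exact absurd (Finset.mem_univ i) hb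
      have hgt : g ((1-t) • z + t • (Pi.single i 1 : ι → ℝ)) = m + t*(2*(S - m) + t*B) := by
        simp only [hg_def]
        rw [Finset.sum_congr rfl (fun j _ => by rw [hpt j, sq_expand])]
        rw [Finset.sum_add_distrib, Finset.sum_add_distrib, ← Finset.mul_sum, ← Finset.mul_sum]
        have : ∑ j, (p j * c i j - p j ^ 2) = S - m := by
          rw [Finset.sum_sub_distrib]
        rw [Finset.mul_sum]
        rw [show (∑ j, (p j)^2) = m from rfl]
        rw [← Finset.mul_sum, ← Finset.mul_sum, this]
        ring
      have hgz : g z = m := by simp only [hg_def]; rfl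
      have h2 : g z ≤ g ((1-t) • z + t • (Pi.single i 1 : ι → ℝ)) := hge
      rw [hgt, hgz] at h2
      nlinarith
    -- now derive contradiction
    have hA : 2*(S - m) < 0 := by linarith
    set t : ℝ := min 1 ((2*(m - S))/(B+1)) with ht_def
    have ht0 : 0 < t := by
      apply lt_min one_pos
      apply div_pos (by linarith) (by linarith)
    have ht1 : t ≤ 1 := min_le_left _ _
    have := hφ t ht0 ht1
    have htB : t * B ≤ (2*(m-S))/(B+1) * B := by
      apply mul_le_mul_of_nonneg_right (min_le_right _ _) hB
    have : (2*(m-S))/(B+1) * B < 2*(m-S) := by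
      rw [div_mul_eq_mul_div, div_lt_iff₀ (by linarith)]
      nlinarith
    linarith
  obtain ⟨i, hi⟩ := h (fun j => - p j)
  have : ∑ j, c i j * (- p j) = - ∑ j, p j * c i j := by
    rw [← Finset.sum_neg_distrib]
    exact Finset.sum_congr rfl (fun j _ => by ring)
  rw [this] at hi
  have := key i
  linarith

lemma sum_vanish {α : Type*} [Fintype α] (t : Finset α) (f : α → ℝ)
    (hf : ∀ i ∉ t, f i = 0) : ∑ i, f i = ∑ i ∈ t, f i :=
  (Finset.sum_subset t.subset_univ (fun x _ hx => hf x hx)).symm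

/-- `t` supports a nonnegative vector summing to 1 whose image under `A` is `good` on `t`. -/
def BadOn {n : ℕ} (A : Matrix (Fin n) (Fin n) ℝ) (good : ℝ → Prop) (t : Finset (Fin n)) : Prop :=
  ∃ y : Fin n → ℝ, (∀ i, 0 ≤ y i) ∧ (∀ i ∉ t, y i = 0) ∧ (∑ i, y i = 1) ∧
    ∀ i ∈ t, good ((A *ᵥ y) i)

lemma badOn_flip {n : ℕ} (A : Matrix (Fin n) (Fin n) ℝ) (good : ℝ → Prop)
    (hmono : ∀ r r' : ℝ, r ≤ r' → good r' → good r) (t₀ : Finset (Fin n))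
    (h : BadOn A good t₀) : ∃ u ⊆ t₀, BadOn Aᵀ good u := by
  classical
  have hmv : ∀ (B : Matrix (Fin n) (Fin n) ℝ) (x : Fin n → ℝ) i,
      (B *ᵥ x) i = ∑ j, B i j * x j := fun B x i => rfl
  -- choose a minimal bad subset t of t₀
  have hex : (univ.filter (fun t => t ⊆ t₀ ∧ BadOn A good t)).Nonempty :=
    ⟨t₀, by simp [h]⟩
  obtain ⟨t, htmem, htmin⟩ := Finset.exists_min_image _ Finset.card hex
  rw [Finset.mem_filter] at htmem
  obtain ⟨-, hts, htbad⟩ := htmem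
  obtain ⟨y₀, hy₀0, hy₀s, hy₀1, hy₀g⟩ := htbad
  have ht : t.Nonempty := by
    rw [Finset.nonempty_iff_ne_empty]
    rintro rfl
    rw [Finset.sum_congr rfl (fun i _ => hy₀s i (Finset.notMem_empty i))] at hy₀1
    simp at hy₀1
  -- minimize the max of (A *ᵥ x) over the part of the simplex supported on t
  set K : Set (Fin n → ℝ) := stdSimplex ℝ (Fin n) ∩ {x | ∀ j ∉ t, x j = 0} with hK_def
  have hKcl : IsClosed {x : Fin n → ℝ | ∀ j ∉ t, x j = 0} := by
    have : {x : Fin n → ℝ | ∀ j ∉ t, x j = 0} =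
        ⋂ (j : Fin n) (_ : j ∉ t), {x : Fin n → ℝ | x j = 0} := by
      ext x; simp
    rw [this]
    exact isClosed_iInter fun j => isClosed_iInter fun _ =>
      isClosed_eq (continuous_apply j) continuous_const
  have hKcomp : IsCompact K := (isCompact_stdSimplex ℝ _).inter_right hKcl
  have hy₀K : y₀ ∈ K := ⟨⟨hy₀0, hy₀1⟩, hy₀s⟩
  set f : (Fin n → ℝ) → ℝ := fun x => t.sup' ht (fun i => (A *ᵥ x) i) with hf_def
  have hfc : Continuous f := by
    apply Continuous.finset_sup'_apply ht
    intro i _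
    simp only [hmv]
    exact continuous_finset_sum _ (fun j _ => continuous_const.mul (continuous_apply j))
  obtain ⟨y, hyK, hymin⟩ := hKcomp.exists_isMinOn ⟨y₀, hy₀K⟩ hfc.continuousOn
  obtain ⟨⟨hy0, hy1⟩, hyvan⟩ := hyK
  set v : ℝ := t.sup' ht (fun i => (A *ᵥ y) i) with hv_def
  have hle : ∀ i ∈ t, (A *ᵥ y) i ≤ v := fun i hi => Finset.le_sup' _ hi
  have hgoodv : good v := by
    obtain ⟨i₁, hi₁t, hi₁⟩ := Finset.exists_mem_eq_sup' ht (fun i => (A *ᵥ y₀) i)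
    have hvy₀ : v ≤ t.sup' ht (fun i => (A *ᵥ y₀) i) := hymin hy₀K
    exact hmono _ _ (hvy₀.trans_eq hi₁) (hy₀g i₁ hi₁t)
  -- the minimizer has full support on t
  have hsupp : ∀ j ∈ t, 0 < y j := by
    by_contra hcon
    push_neg at hcon
    obtain ⟨j₁, hj₁t, hj₁⟩ := hcon
    have hj₁0 : y j₁ = 0 := le_antisymm hj₁ (hy0 j₁)
    set T : Finset (Fin n) := t.filter (fun j => y j ≠ 0) with hT_def
    have hTbad : BadOn A good T := by
      refine ⟨y, hy0, ?_, hy1, ?_⟩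
      · intro i hi
        by_cases hit : i ∈ t
        · by_contra h0
          exact hi (Finset.mem_filter.2 ⟨hit, h0⟩)
        · exact hyvan i hit
      · intro i hi
        exact hmono _ _ (hle i (Finset.filter_subset _ _ hi)) hgoodv
    have hTmem : T ∈ univ.filter (fun t' => t' ⊆ t₀ ∧ BadOn A good t') := by
      simp only [Finset.mem_filter, Finset.mem_univ, true_and]
      exact ⟨(Finset.filter_subset _ _).trans hts, hTbad⟩
    have hTlt : T.card < t.card := by
      apply Finset.card_lt_card
      rw [Finset.ssubset_iff_of_subset (Finset.filter_subset _ _)]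
      exact ⟨j₁, hj₁t, fun hmem => (Finset.mem_filter.1 hmem).2 hj₁0⟩
    exact absurd (htmin T hTmem) (not_le.2 hTlt)
  -- the active set
  set I : Finset (Fin n) := t.filter (fun i => (A *ᵥ y) i = v) with hI_def
  have hIt : I ⊆ t := Finset.filter_subset _ _
  have hIne : I.Nonempty := by
    obtain ⟨i₀, hi₀t, hi₀⟩ := Finset.exists_mem_eq_sup' ht (fun i => (A *ᵥ y) i)
    exact ⟨i₀, Finset.mem_filter.2 ⟨hi₀t, hi₀.symm⟩⟩
  -- no feasible descent direction
  have hdesc : ∀ d : Fin n → ℝ, (∀ j ∉ t, d j = 0) → (∑ j, d j = 0) →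
      ∃ i ∈ I, 0 ≤ (A *ᵥ d) i := by
    intro d hd0 hdsum
    by_contra hcon
    push_neg at hcon
    set ε₁ : ℝ := t.inf' ht (fun j => y j / (|d j| + 1)) with hε₁_def
    have hε₁pos : 0 < ε₁ := by
      rw [Finset.lt_inf'_iff]
      exact fun j hj => div_pos (hsupp j hj) (by positivity)
    set g₂ : Fin n → ℝ := fun i => (v - (A *ᵥ y) i) / (|(A *ᵥ d) i| + 1) with hg₂_def
    set ε₂ : ℝ := if h2 : (t \ I).Nonempty then (t \ I).inf' h2 g₂ else 1 with hε₂_def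
    have hε₂pos : 0 < ε₂ := by
      rw [hε₂_def]
      split_ifs with h2
      · rw [Finset.lt_inf'_iff]
        intro i hi
        rw [Finset.mem_sdiff] at hi
        have h1 : (A *ᵥ y) i < v := lt_of_le_of_ne (hle i hi.1)
          (fun he => hi.2 (Finset.mem_filter.2 ⟨hi.1, he⟩))
        exact div_pos (by linarith) (by positivity)
      · exact one_pos
    set ε : ℝ := min ε₁ ε₂ with hε_def
    have hεpos : 0 < ε := lt_min hε₁pos hε₂pos
    have hfeas : y + ε • d ∈ K := by
      refine ⟨⟨?_, ?_⟩, ?_⟩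
      · intro j
        by_cases hjt : j ∈ t
        · have h1 : ε ≤ y j / (|d j| + 1) := (min_le_left _ _).trans (Finset.inf'_le _ hjt)
          have h2 : ε * d j ≥ -(ε * |d j|) := by
            have := neg_abs_le (d j)
            nlinarith
          have h3 : ε * |d j| ≤ y j / (|d j| + 1) * |d j| :=
            mul_le_mul_of_nonneg_right h1 (abs_nonneg _)
          have h4 : y j / (|d j| + 1) * |d j| ≤ y j := by
            rw [div_mul_eq_mul_div, div_le_iff₀ (by positivity)]
            nlinarith [hsupp j hjt, abs_nonneg (d j)]
          simp only [Pi.add_apply, Pi.smul_apply, smul_eq_mul]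
          linarith
        · simp only [Pi.add_apply, Pi.smul_apply, smul_eq_mul, hyvan j hjt, hd0 j hjt]
          simp
      · simp only [Pi.add_apply, Pi.smul_apply, smul_eq_mul]
        rw [Finset.sum_add_distrib, hy1, ← Finset.mul_sum, hdsum]
        ring
      · intro j hjt
        simp only [Pi.add_apply, Pi.smul_apply, smul_eq_mul, hyvan j hjt, hd0 j hjt]
        simp
    have hlt : f (y + ε • d) < v := by
      rw [hf_def]
      rw [Finset.sup'_lt_iff]
      intro i hi
      have hsplit : (A *ᵥ (y + ε • d)) i = (A *ᵥ y) i + ε * (A *ᵥ d) i := by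
        rw [Matrix.mulVec_add, Matrix.mulVec_smul]
        simp [smul_eq_mul]
      rw [hsplit]
      by_cases hiI : i ∈ I
      · have h1 : (A *ᵥ y) i = v := (Finset.mem_filter.1 hiI).2
        have h2 : (A *ᵥ d) i < 0 := hcon i hiI
        nlinarith
      · have h1 : (A *ᵥ y) i < v := lt_of_le_of_ne (hle i hi)
          (fun he => hiI (Finset.mem_filter.2 ⟨hi, he⟩))
        have h2 : ε ≤ g₂ i := by
          have hmem : i ∈ t \ I := Finset.mem_sdiff.2 ⟨hi, hiI⟩
          have h3 : ε₂ ≤ g₂ i := by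
            rw [hε₂_def]
            rw [dif_pos ⟨i, hmem⟩]
            exact Finset.inf'_le _ hmem
          exact (min_le_right _ _).trans h3
        have h4 : ε * (A *ᵥ d) i ≤ ε * |(A *ᵥ d) i| := by
          have := le_abs_self ((A *ᵥ d) i)
          nlinarith
        have h5 : ε * |(A *ᵥ d) i| < v - (A *ᵥ y) i := by
          have h6 : ε * |(A *ᵥ d) i| ≤ g₂ i * |(A *ᵥ d) i| :=
            mul_le_mul_of_nonneg_right h2 (abs_nonneg _)
          have h7 : g₂ i * |(A *ᵥ d) i| < v - (A *ᵥ y) i := by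
            rw [hg₂_def]
            rw [div_mul_eq_mul_div, div_lt_iff₀ (by positivity)]
            nlinarith [abs_nonneg ((A *ᵥ d) i)]
          linarith
        linarith
    exact absurd (hymin hfeas) (not_le.2 hlt)
  -- apply Gordan's lemma
  obtain ⟨i₀, hi₀⟩ := hIne
  haveI : Nonempty ↥I := ⟨⟨i₀, hi₀⟩⟩
  have hcard : (0:ℝ) < t.card := by
    have := ht.card_pos
    exact_mod_cast this
  set c : ↥I → Fin n → ℝ :=
    fun i j => if j ∈ t then A i j - (∑ j' ∈ t, A i j') / t.card else 0 with hc_def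
  have hgord : ∀ d : Fin n → ℝ, ∃ i : ↥I, 0 ≤ ∑ j, c i j * d j := by
    intro d
    set m : ℝ := (∑ j ∈ t, d j) / t.card with hm_def
    set d' : Fin n → ℝ := fun j => if j ∈ t then d j - m else 0 with hd'_def
    have h1 : ∀ j ∉ t, d' j = 0 := fun j hj => if_neg hj
    have h2 : ∑ j, d' j = 0 := by
      rw [sum_vanish t d' h1]
      rw [Finset.sum_congr rfl (fun j hj => if_pos hj)]
      rw [Finset.sum_sub_distrib, Finset.sum_const, nsmul_eq_mul, hm_def]
      field_simp
      ring
    obtain ⟨i, hiI, hi⟩ := hdesc d' h1 h2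
    refine ⟨⟨i, hiI⟩, ?_⟩
    have hEq : ∑ j, c ⟨i, hiI⟩ j * d j = (A *ᵥ d') i := by
      rw [hmv]
      rw [sum_vanish t (fun j => c ⟨i, hiI⟩ j * d j)
        (fun j hj => by simp [hc_def, if_neg hj]),
        sum_vanish t (fun j => A i j * d' j)
        (fun j hj => by simp [hd'_def, if_neg hj])]
      have e0 : ∀ j ∈ t, c ⟨i, hiI⟩ j * d j
          = A i j * d j - (∑ j' ∈ t, A i j') / t.card * d j := by
        intro j hj
        simp only [hc_def, if_pos hj]
        ring
      have e0' : ∀ j ∈ t, A i j * d' j = A i j * d j - A i j * m := by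
        intro j hj
        simp only [hd'_def, if_pos hj]
        ring
      rw [Finset.sum_congr rfl e0, Finset.sum_congr rfl e0',
        Finset.sum_sub_distrib, Finset.sum_sub_distrib, ← Finset.mul_sum, ← Finset.sum_mul,
        hm_def]
      ring
    rw [hEq]
    exact hi
  obtain ⟨z, hz0, hz1, hzc⟩ := gordan c hgord
  set μ : ℝ := ∑ i : ↥I, z i * ((∑ j' ∈ t, A i j') / t.card) with hμ_def
  have hμ : ∀ j ∈ t, ∑ i : ↥I, z i * A i j = μ := by
    intro j hj
    have h0 := hzc j
    have h1 : ∑ i : ↥I, z i * c i j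
        = ∑ i : ↥I, (z i * A i j - z i * ((∑ j' ∈ t, A i j') / t.card)) := by
      refine Finset.sum_congr rfl (fun i _ => ?_)
      rw [hc_def]; simp only [if_pos hj]; ring
    rw [h1, Finset.sum_sub_distrib] at h0
    rw [hμ_def]
    linarith
  set w : Fin n → ℝ := fun j => if hj : j ∈ I then z ⟨j, hj⟩ else 0 with hw_def
  have hw0 : ∀ j, 0 ≤ w j := by
    intro j
    rw [hw_def]
    dsimp only
    split_ifs with hj
    · exact hz0 _
    · exact le_refl 0
  have hwvan : ∀ j ∉ I, w j = 0 := by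
    intro j hj
    rw [hw_def]
    dsimp only
    rw [dif_neg hj]
  have hwsum : ∑ j, w j = 1 := by
    rw [sum_vanish I w hwvan, ← Finset.sum_attach I w, ← hz1, Finset.univ_eq_attach]
    refine Finset.sum_congr rfl (fun x _ => ?_)
    rw [hw_def]
    dsimp only
    rw [dif_pos x.2]
  have hwA : ∀ j ∈ t, (Aᵀ *ᵥ w) j = μ := by
    intro j hj
    rw [hmv]
    rw [Finset.sum_congr rfl (fun i (_ : i ∈ univ) => by
      rw [Matrix.transpose_apply] : ∀ i ∈ univ, Aᵀ j i * w i = A i j * w i)]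
    rw [sum_vanish I (fun i => A i j * w i) (fun i hi => by rw [hwvan i hi, mul_zero])]
    rw [← Finset.sum_attach I (fun i => A i j * w i), ← hμ j hj, Finset.univ_eq_attach]
    refine Finset.sum_congr rfl (fun x _ => ?_)
    rw [hw_def]
    dsimp only
    rw [dif_pos x.2]
    ring
  have hyt : ∑ j ∈ t, y j = 1 := (sum_vanish t y hyvan).symm.trans hy1
  have hμv : μ = v := by
    have e1 : ∑ j ∈ t, (∑ i : ↥I, z i * A i j) * y j = μ := by
      rw [Finset.sum_congr rfl (fun j hj => by rw [hμ j hj] : ∀ j ∈ t,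
        (∑ i : ↥I, z i * A i j) * y j = μ * y j), ← Finset.mul_sum, hyt, mul_one]
    have e2 : ∑ j ∈ t, (∑ i : ↥I, z i * A i j) * y j = ∑ i : ↥I, z i * (A *ᵥ y) i := by
      rw [Finset.sum_congr rfl (fun j (_ : j ∈ t) => Finset.sum_mul _ _ _ : ∀ j ∈ t,
        (∑ i : ↥I, z i * A i j) * y j = ∑ i : ↥I, z i * A i j * y j)]
      rw [Finset.sum_comm]
      refine Finset.sum_congr rfl (fun i _ => ?_)
      rw [hmv, sum_vanish t (fun j => A (↑i) j * y j)
        (fun j hj => by rw [hyvan j hj, mul_zero]), Finset.mul_sum]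
      exact Finset.sum_congr rfl (fun j _ => by ring)
    have e3 : ∑ i : ↥I, z i * (A *ᵥ y) i = v := by
      rw [Finset.sum_congr rfl (fun i (_ : i ∈ univ) => by
        rw [(Finset.mem_filter.1 i.2).2] : ∀ i ∈ (univ : Finset ↥I),
        z i * (A *ᵥ y) (↑i) = z i * v)]
      rw [← Finset.sum_mul, hz1, one_mul]
    rw [← e1, e2, e3]
  refine ⟨I.filter (fun j => w j ≠ 0), ((Finset.filter_subset _ _).trans hIt).trans hts,
    w, hw0, ?_, hwsum, ?_⟩
  · intro i hi
    by_cases hiI : i ∈ I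
    · by_contra h0
      exact hi (Finset.mem_filter.2 ⟨hiI, h0⟩)
    · exact hwvan i hiI
  · intro j hj
    have hjt : j ∈ t := hIt (Finset.filter_subset _ _ hj)
    rw [hwA j hjt, hμv]
    exact hgoodv

lemma exists_bad_iff {n : ℕ} (A : Matrix (Fin n) (Fin n) ℝ) (s : Finset (Fin n))
    (P : ℝ → Prop) (hscale : ∀ (r c : ℝ), 0 < c → P r → P (c * r)) :
    (∃ x : ↥s → ℝ, x ≠ 0 ∧ 0 ≤ x ∧
      ∀ i, 0 < x i → P ((PrincipalSubmatrix A s).mulVec x i)) ↔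
    ∃ t ⊆ s, BadOn A P t := by
  classical
  have hmv : ∀ (x : ↥s → ℝ) (i : ↥s), (PrincipalSubmatrix A s).mulVec x i
      = ∑ j : ↥s, A (↑i) (↑j) * x j := fun x i => rfl
  constructor
  · rintro ⟨x, hx0, hxnn, hxP⟩
    set xh : Fin n → ℝ := fun j => if hj : j ∈ s then x ⟨j, hj⟩ else 0 with hxh_def
    have hxhnn : ∀ j, 0 ≤ xh j := by
      intro j
      rw [hxh_def]; dsimp only
      split_ifs with hj
      · exact hxnn _
      · exact le_refl 0
    have hxh_eq : ∀ j : ↥s, xh ↑j = x j := by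
      intro j
      rw [hxh_def]; dsimp only
      rw [dif_pos j.2]
    obtain ⟨i₀, hi₀⟩ : ∃ i₀ : ↥s, x i₀ ≠ 0 := Function.ne_iff.1 hx0
    have hi₀pos : 0 < x i₀ := lt_of_le_of_ne (hxnn i₀) (Ne.symm hi₀)
    set σ : ℝ := ∑ j, xh j with hσ_def
    have hσpos : 0 < σ :=
      Finset.sum_pos' (fun j _ => hxhnn j) ⟨↑i₀, Finset.mem_univ _, by rw [hxh_eq i₀]; exact hi₀pos⟩
    set t : Finset (Fin n) := s.filter (fun j => xh j ≠ 0) with ht_def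
    refine ⟨t, Finset.filter_subset _ _, fun j => xh j / σ, fun j => div_nonneg (hxhnn j) hσpos.le,
      ?_, ?_, ?_⟩
    · intro j hj
      by_cases hjs : j ∈ s
      · by_contra h0
        have : xh j ≠ 0 := fun he => h0 (by dsimp only; rw [he, zero_div])
        exact hj (Finset.mem_filter.2 ⟨hjs, this⟩)
      · rw [hxh_def]; dsimp only; rw [dif_neg hjs, zero_div]
    · rw [← Finset.sum_div, div_self hσpos.ne']
    · intro i hi
      obtain ⟨his, hixh⟩ := Finset.mem_filter.1 hi
      have hipos : 0 < x ⟨i, his⟩ := by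
        have := hxh_eq ⟨i, his⟩
        exact lt_of_le_of_ne (hxnn _) (fun he => hixh (by rw [this, ← he]))
      have hP := hxP ⟨i, his⟩ hipos
      have key : (A *ᵥ fun j => xh j / σ) i = (1/σ) * (PrincipalSubmatrix A s).mulVec x ⟨i, his⟩ := by
        show ∑ j, A i j * (xh j / σ) = _
        rw [hmv]
        rw [sum_vanish s (fun j => A i j * (xh j / σ)) (fun j hj => by
          rw [hxh_def]; dsimp only; rw [dif_neg hj, zero_div, mul_zero])]
        rw [← Finset.sum_attach s (fun j => A i j * (xh j / σ)), Finset.univ_eq_attach,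
          Finset.mul_sum]
        refine Finset.sum_congr rfl (fun j _ => ?_)
        rw [hxh_eq j]
        ring
      rw [key]
      exact hscale _ _ (by positivity) hP
  · rintro ⟨t, hts, y, hy0, hyvan, hy1, hyg⟩
    have hyvs : ∀ j ∉ s, y j = 0 := fun j hj => hyvan j (fun hjt => hj (hts hjt))
    refine ⟨fun i => y ↑i, ?_, fun i => hy0 _, ?_⟩
    · intro h0
      have : ∀ j, y j = 0 := by
        intro j
        by_cases hjs : j ∈ s
        · exact congrFun h0 ⟨j, hjs⟩
        · exact hyvs j hjs
      rw [Finset.sum_congr rfl (fun j _ => this j)] at hy1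
      simp at hy1
    · intro i hipos
      have hit : ↑i ∈ t := by
        by_contra hin
        exact absurd (hyvan ↑i hin) (ne_of_gt hipos)
      have key : (PrincipalSubmatrix A s).mulVec (fun j => y ↑j) i = (A *ᵥ y) ↑i := by
        rw [hmv]
        show _ = ∑ j, A (↑i) j * y j
        rw [sum_vanish s (fun j => A (↑i) j * y j) (fun j hj => by
          rw [hyvs j hj, mul_zero])]
        rw [← Finset.sum_attach s (fun j => A (↑i) j * y j), Finset.univ_eq_attach]
      rw [key]
      exact hyg _ hit

lemma not_semiMonotone_principal_iff {n : ℕ} (A : Matrix (Fin n) (Fin n) ℝ)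
    (s : Finset (Fin n)) :
    ¬ SemiMonotone (PrincipalSubmatrix A s) ↔ ∃ t ⊆ s, BadOn A (fun r => r < 0) t := by
  rw [← exists_bad_iff A s (fun r => r < 0) (fun r c hc hr => mul_neg_of_pos_of_neg hc hr)]
  unfold SemiMonotone
  push_neg
  rfl

lemma not_strictlySemiMonotone_principal_iff {n : ℕ} (A : Matrix (Fin n) (Fin n) ℝ)
    (s : Finset (Fin n)) :
    ¬ StrictlySemiMonotone (PrincipalSubmatrix A s) ↔ ∃ t ⊆ s, BadOn A (fun r => r ≤ 0) t := by
  rw [← exists_bad_iff A s (fun r => r ≤ 0) (fun r c hc hr => mul_nonpos_of_nonneg_of_nonpos hc.le hr)]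
  unfold StrictlySemiMonotone
  push_neg
  rfl

lemma not_semiMonotone_flip {n : ℕ} (A : Matrix (Fin n) (Fin n) ℝ) (s : Finset (Fin n))
    (h : ¬ SemiMonotone (PrincipalSubmatrix A s)) :
    ¬ SemiMonotone (PrincipalSubmatrix Aᵀ s) := by
  rw [not_semiMonotone_principal_iff] at h ⊢
  obtain ⟨t, hts, hbad⟩ := h
  obtain ⟨u, hut, hbadu⟩ := badOn_flip A _ (fun r r' h1 h2 => lt_of_le_of_lt h1 h2) t hbad
  exact ⟨u, hut.trans hts, hbadu⟩

lemma not_strictlySemiMonotone_flip {n : ℕ} (A : Matrix (Fin n) (Fin n) ℝ) (s : Finset (Fin n))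
    (h : ¬ StrictlySemiMonotone (PrincipalSubmatrix A s)) :
    ¬ StrictlySemiMonotone (PrincipalSubmatrix Aᵀ s) := by
  rw [not_strictlySemiMonotone_principal_iff] at h ⊢
  obtain ⟨t, hts, hbad⟩ := h
  obtain ⟨u, hut, hbadu⟩ := badOn_flip A _ (fun r r' h1 h2 => le_trans h1 h2) t hbad
  exact ⟨u, hut.trans hts, hbadu⟩

lemma semiMonotone_principal_transpose_iff {n : ℕ} (A : Matrix (Fin n) (Fin n) ℝ)
    (s : Finset (Fin n)) :
    SemiMonotone (PrincipalSubmatrix A s) ↔ SemiMonotone (PrincipalSubmatrix Aᵀ s) := by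
  constructor
  · intro h
    by_contra hn
    have := not_semiMonotone_flip Aᵀ s hn
    rw [Matrix.transpose_transpose] at this
    exact this h
  · intro h
    by_contra hn
    exact not_semiMonotone_flip A s hn h

lemma strictlySemiMonotone_principal_transpose_iff {n : ℕ} (A : Matrix (Fin n) (Fin n) ℝ)
    (s : Finset (Fin n)) :
    StrictlySemiMonotone (PrincipalSubmatrix A s) ↔
      StrictlySemiMonotone (PrincipalSubmatrix Aᵀ s) := by
  constructor
  · intro h
    by_contra hn
    have := not_strictlySemiMonotone_flip Aᵀ s hn
    rw [Matrix.transpose_transpose] at this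
    exact this h
  · intro h
    by_contra hn
    exact not_strictlySemiMonotone_flip A s hn h

end Auxiliary

theorem stmt15 (n k : ℕ) (hk : k ≤ n) (A : Matrix (Fin n) (Fin n) ℝ) :
    (SemimonotoneExactOrder A k ↔ SemimonotoneExactOrder Aᵀ k) ∧
    (StrictlySemimonotoneExactOrder A k ↔ StrictlySemimonotoneExactOrder Aᵀ k) := by
  have hs : ∀ s : Finset (Fin n),
      SemiMonotone (PrincipalSubmatrix A s) ↔ SemiMonotone (PrincipalSubmatrix Aᵀ s) :=
    fun s => semiMonotone_principal_transpose_iff A s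
  have hst : ∀ s : Finset (Fin n),
      StrictlySemiMonotone (PrincipalSubmatrix A s) ↔
        StrictlySemiMonotone (PrincipalSubmatrix Aᵀ s) :=
    fun s => strictlySemiMonotone_principal_transpose_iff A s
  constructor
  · constructor
    · rintro ⟨h1, h2⟩
      exact ⟨fun s hc => (hs s).mp (h1 s hc), fun s hc hsm => h2 s hc ((hs s).mpr hsm)⟩
    · rintro ⟨h1, h2⟩
      exact ⟨fun s hc => (hs s).mpr (h1 s hc), fun s hc hsm => h2 s hc ((hs s).mp hsm)⟩
  · constructor
    · rintro ⟨h1, h2⟩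
      exact ⟨fun s hc => (hst s).mp (h1 s hc), fun s hc hsm => h2 s hc ((hst s).mpr hsm)⟩
    · rintro ⟨h1, h2⟩
      exact ⟨fun s hc => (hst s).mpr (h1 s hc), fun s hc hsm => h2 s hc ((hst s).mp hsm)⟩
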